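/- The extended long line L̄ has exactly 3 path components: {-Ω}, {Ω}, and L. -/

import Mathlib

/-- The set of countable ordinals (ordinals less than the first uncountable ordinal `ω₁`). -/
def SOmega : Type 1 := Set.Iio (Cardinal.aleph 1).ord

noncomputable instance : LinearOrder SOmega :=
  inferInstanceAs (LinearOrder (Set.Iio (Cardinal.aleph 1).ord))

/-- The half-open long line `L₊ = [0,1) × S_Ω` with the lexicographic order
(ordinal coordinate first, then the real coordinate). -/
def LongLinePlus : Type 1 := SOmega ×ₗ (Set.Ico (0:ℝ) 1)

noncomputable instance : LinearOrder LongLinePlus :=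
  inferInstanceAs (LinearOrder (SOmega ×ₗ (Set.Ico (0:ℝ) 1)))

/-- `L₊` carries the order topology. -/
noncomputable instance : TopologicalSpace LongLinePlus := Preorder.topology LongLinePlus
instance : OrderTopology LongLinePlus := ⟨rfl⟩

/-- The strictly positive part of `L₊` (elements other than the minimum `0`). -/
def LongLinePlusPos : Type 1 := {x : LongLinePlus // ∃ y, y < x}

noncomputable instance : LinearOrder LongLinePlusPos :=
  inferInstanceAs (LinearOrder {x : LongLinePlus // ∃ y, y < x})

/-- The long line `L`: a reversed copy of `L₊ \ {0}` followed by `L₊`,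
i.e. two copies of `L₊` glued at `0` with the first copy order-reversed. -/
def LongLine : Type 1 := (LongLinePlusPos)ᵒᵈ ⊕ₗ LongLinePlus

noncomputable instance : LinearOrder LongLine :=
  inferInstanceAs (LinearOrder ((LongLinePlusPos)ᵒᵈ ⊕ₗ LongLinePlus))

noncomputable instance : TopologicalSpace LongLine := Preorder.topology LongLine
instance : OrderTopology LongLine := ⟨rfl⟩

/-- The extended long line `L̄ = {-Ω} ∪ L ∪ {Ω}`, obtained by adjoining a bottom element
`-Ω` and a top element `Ω` to `L`, with the order topology. -/
def LongLineBar : Type 1 := WithBot (WithTop LongLine)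

noncomputable instance : LinearOrder LongLineBar :=
  inferInstanceAs (LinearOrder (WithBot (WithTop LongLine)))

noncomputable instance : OrderTop LongLineBar := inferInstanceAs (OrderTop (WithBot (WithTop LongLine)))
instance : OrderBot LongLineBar := inferInstanceAs (OrderBot (WithBot (WithTop LongLine)))

noncomputable instance : TopologicalSpace LongLineBar := Preorder.topology LongLineBar
instance : OrderTopology LongLineBar := ⟨rfl⟩

/-- The inclusion `L ↪ L̄`. -/
def LongLine.toBar (x : LongLine) : LongLineBar := WithBot.some (WithTop.some x)


open Cardinal

noncomputable def omega1 : Ordinal := (Cardinal.aleph 1).ord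

theorem omega1_isLimit : Order.IsSuccLimit omega1 := Cardinal.isSuccLimit_ord (le_of_lt Cardinal.aleph0_lt_aleph_one)

theorem card_le_aleph0 {o : Ordinal} (h : o < omega1) : o.card ≤ ℵ₀ := by
  have := Cardinal.lt_ord.1 h
  rwa [← Cardinal.succ_aleph0, Order.lt_succ_iff] at this

theorem countable_Iio {o : Ordinal.{0}} (h : o < omega1) : Countable (Set.Iio o) := by
  rw [← Cardinal.mk_le_aleph0_iff, Ordinal.mk_Iio_ordinal]
  calc Cardinal.lift.{1} o.card ≤ Cardinal.lift.{1} ℵ₀ := Cardinal.lift_le.2 (card_le_aleph0 h)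
  _ = ℵ₀ := Cardinal.lift_aleph0

theorem succ_lt_omega1 {o : Ordinal} (h : o < omega1) : o + 1 < omega1 := by
  rw [Ordinal.add_one_eq_succ]
  exact omega1_isLimit.succ_lt h

theorem sup_lt_omega1 (f : ℕ → Ordinal) (hf : ∀ n, f n < omega1) : (⨆ n, f n) < omega1 :=
  by unfold omega1 at hf ⊢; rw [Cardinal.ord_aleph] at hf ⊢; exact Ordinal.iSup_lt_omega_one hf

namespace LL
abbrev Ico01 := Set.Ico (0:ℝ) 1
def mkP (a : SOmega) (r : Ico01) : LongLinePlus := toLex (a, r)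
def fstP (p : LongLinePlus) : SOmega := (ofLex p).1
def sndP (p : LongLinePlus) : Ico01 := (ofLex p).2

theorem plus_lt_iff {p q : LongLinePlus} :
    p < q ↔ (fstP p < fstP q ∨ (fstP p = fstP q ∧ sndP p < sndP q)) := Prod.lex_def
theorem plus_le_iff {p q : LongLinePlus} :
    p ≤ q ↔ (fstP p < fstP q ∨ (fstP p = fstP q ∧ sndP p ≤ sndP q)) := Prod.lex_def
theorem plus_ext {p q : LongLinePlus} (h1 : fstP p = fstP q) (h2 : sndP p = sndP q) : p = q := by
  show toLex (ofLex p) = toLex (ofLex q)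
  rw [show ofLex p = (fstP p, sndP p) from rfl, show ofLex q = (fstP q, sndP q) from rfl, h1, h2]

def inL (a : LongLinePlusPos) : LongLine := toLex (Sum.inl (OrderDual.toDual a))
def inR (p : LongLinePlus) : LongLine := toLex (Sum.inr p)

theorem posval_lt {a b : LongLinePlusPos} : a < b ↔ a.val < b.val := Iff.rfl
theorem inL_lt_inL {a b : LongLinePlusPos} : inL a < inL b ↔ b < a := Sum.Lex.inl_lt_inl_iff
theorem inR_lt_inR {p q : LongLinePlus} : inR p < inR q ↔ p < q := Sum.Lex.inr_lt_inr_iff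
theorem inL_lt_inR (a : LongLinePlusPos) (p : LongLinePlus) : inL a < inR p := Sum.Lex.inl_lt_inr _ _
theorem not_inR_le_inL {a : LongLinePlusPos} {p : LongLinePlus} : ¬ inR p ≤ inL a := Sum.Lex.not_inr_le_inl
theorem inL_le_inL {a b : LongLinePlusPos} : inL a ≤ inL b ↔ b ≤ a := Sum.Lex.inl_le_inl_iff
theorem inR_le_inR {p q : LongLinePlus} : inR p ≤ inR q ↔ p ≤ q := Sum.Lex.inr_le_inr_iff

theorem L_cases (z : LongLine) : (∃ a, z = inL a) ∨ (∃ p, z = inR p) := by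
  rcases h : ofLex z with a | p
  · exact Or.inl ⟨OrderDual.ofDual a, by
      show z = toLex (Sum.inl a)
      rw [← h]; rfl⟩
  · exact Or.inr ⟨p, by
      show z = toLex (Sum.inr p)
      rw [← h]; rfl⟩

theorem bar_cases (w : LongLineBar) : w = ⊥ ∨ w = ⊤ ∨ ∃ z : LongLine, w = z.toBar := by
  rcases w with _ | (_ | z)
  · exact Or.inl rfl
  · exact Or.inr (Or.inl rfl)
  · exact Or.inr (Or.inr ⟨z, rfl⟩)

theorem toBar_lt_toBar {a b : LongLine} : a.toBar < b.toBar ↔ a < b := by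
  show ((a : WithTop LongLine) : WithBot (WithTop LongLine)) < ((b : WithTop LongLine) : WithBot (WithTop LongLine)) ↔ a < b
  rw [WithBot.coe_lt_coe, WithTop.coe_lt_coe]
theorem toBar_le_toBar {a b : LongLine} : a.toBar ≤ b.toBar ↔ a ≤ b := by
  show ((a : WithTop LongLine) : WithBot (WithTop LongLine)) ≤ ((b : WithTop LongLine) : WithBot (WithTop LongLine)) ↔ a ≤ b
  rw [WithBot.coe_le_coe, WithTop.coe_le_coe]
theorem bot_lt_toBar (a : LongLine) : (⊥ : LongLineBar) < a.toBar := by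
  exact WithBot.bot_lt_coe _
theorem toBar_lt_top (a : LongLine) : a.toBar < (⊤ : LongLineBar) := by
  show ((a : WithTop LongLine) : WithBot (WithTop LongLine)) < ((⊤ : WithTop LongLine) : WithBot (WithTop LongLine))
  exact WithBot.coe_lt_coe.mpr (WithTop.coe_lt_top _)
theorem toBar_ne_bot (a : LongLine) : a.toBar ≠ ⊥ := ne_of_gt (bot_lt_toBar a)
theorem toBar_ne_top (a : LongLine) : a.toBar ≠ ⊤ := ne_of_lt (toBar_lt_top a)
theorem toBar_injective : Function.Injective LongLine.toBar := by
  intro a b h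
  have h2 : (a : WithTop LongLine) = (b : WithTop LongLine) := WithBot.coe_injective h
  exact WithTop.coe_injective h2


theorem fstP_mono {p q : LongLinePlus} (h : p ≤ q) : fstP p ≤ fstP q := by
  rcases plus_le_iff.1 h with h' | ⟨h', _⟩
  · exact le_of_lt h'
  · exact le_of_eq h'

theorem somega_lt {a b : SOmega} : a < b ↔ a.val < b.val := Subtype.coe_lt_coe.symm
theorem somega_le {a b : SOmega} : a ≤ b ↔ a.val ≤ b.val := Subtype.coe_le_coe.symm
theorem ico_lt {a b : Ico01} : a < b ↔ a.val < b.val := Subtype.coe_lt_coe.symm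
theorem ico_le {a b : Ico01} : a ≤ b ↔ a.val ≤ b.val := Subtype.coe_le_coe.symm

theorem somega_mem (a : SOmega) : a.val < omega1 := a.2
def ozero : SOmega := ⟨0, omega1_isLimit.pos⟩
def rzero : Ico01 := ⟨0, by norm_num⟩

theorem plus_lub (S : Set LongLinePlus) (hne : S.Nonempty) (hbdd : BddAbove S) :
    ∃ w, IsLUB S w := by
  obtain ⟨pb, hpb⟩ := hbdd
  set A : Set Ordinal := (fun p => (fstP p).val) '' S with hA
  have hAne : A.Nonempty := hne.image _
  have hAbdd : BddAbove A := by
    refine ⟨(fstP pb).val, ?_⟩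
    rintro _ ⟨p, hp, rfl⟩
    exact somega_le.1 (fstP_mono (hpb hp))
  set α := sSup A with hα
  have hαle : ∀ p ∈ S, (fstP p).val ≤ α := fun p hp => le_csSup hAbdd ⟨p, hp, rfl⟩
  have hαlt : α < omega1 := by
    refine lt_of_le_of_lt (csSup_le hAne ?_) (somega_mem (fstP pb))
    rintro _ ⟨p, hp, rfl⟩
    exact somega_le.1 (fstP_mono (hpb hp))
  have hαub : ∀ b ∈ upperBounds S, α ≤ (fstP b).val := by
    intro b hb
    refine csSup_le hAne ?_
    rintro _ ⟨p, hp, rfl⟩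
    exact somega_le.1 (fstP_mono (hb hp))
  by_cases hmem : α ∈ A
  · obtain ⟨p0, hp0S, hp0⟩ := hmem
    set T : Set ℝ := {r | ∃ p ∈ S, (fstP p).val = α ∧ (sndP p).val = r} with hT
    have hTne : T.Nonempty := ⟨(sndP p0).val, p0, hp0S, hp0, rfl⟩
    have hTbdd : BddAbove T := by
      refine ⟨1, ?_⟩
      rintro _ ⟨p, _, _, rfl⟩
      exact le_of_lt (sndP p).2.2
    set r : ℝ := sSup T with hr
    have h0r : (0:ℝ) ≤ r := le_trans (sndP p0).2.1 (le_csSup hTbdd ⟨p0, hp0S, hp0, rfl⟩)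
    have hsndle : ∀ b ∈ upperBounds S, (fstP b).val = α → ∀ r' ∈ T, r' ≤ (sndP b).val := by
      rintro b hb hbα _ ⟨p, hp, hpα, rfl⟩
      have hfst : fstP p = fstP b := Subtype.ext (hpα.trans hbα.symm)
      rcases plus_le_iff.1 (hb hp) with h' | ⟨_, h'⟩
      · exact absurd (hfst ▸ h') (lt_irrefl _)
      · exact ico_le.1 h'
    by_cases hrlt : r < 1
    · refine ⟨mkP ⟨α, hαlt⟩ ⟨r, h0r, hrlt⟩, ?_, ?_⟩
      · intro p hp
        rcases eq_or_lt_of_le (hαle p hp) with h' | h'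
        · refine plus_le_iff.2 (Or.inr ⟨Subtype.ext h', ?_⟩)
          exact ico_le.2 (le_csSup hTbdd ⟨p, hp, h', rfl⟩)
        · exact plus_le_iff.2 (Or.inl (somega_lt.2 h'))
      · intro b hb
        rcases eq_or_lt_of_le (hαub b hb) with h' | h'
        · refine plus_le_iff.2 (Or.inr ⟨Subtype.ext h', ?_⟩)
          exact ico_le.2 (csSup_le hTne (hsndle b hb h'.symm))
        · exact plus_le_iff.2 (Or.inl (somega_lt.2 h'))
    · -- r = 1 case: lub is (α+1, 0)
      have hαlt' : ∀ b ∈ upperBounds S, α < (fstP b).val := by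
        intro b hb
        rcases eq_or_lt_of_le (hαub b hb) with h' | h'
        · exfalso
          refine hrlt (lt_of_le_of_lt (csSup_le hTne (hsndle b hb h'.symm)) (sndP b).2.2)
        · exact h'
      refine ⟨mkP ⟨α + 1, succ_lt_omega1 hαlt⟩ rzero, ?_, ?_⟩
      · intro p hp
        refine plus_le_iff.2 (Or.inl (somega_lt.2 ?_))
        exact lt_of_le_of_lt (hαle p hp) (lt_add_one α)
      · intro b hb
        have h1 : α + 1 ≤ (fstP b).val := by
          rw [Ordinal.add_one_eq_succ]
          exact Order.succ_le_of_lt (hαlt' b hb)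
        rcases eq_or_lt_of_le h1 with h' | h'
        · exact plus_le_iff.2 (Or.inr ⟨Subtype.ext h', (sndP b).2.1⟩)
        · exact plus_le_iff.2 (Or.inl (somega_lt.2 h'))
  · refine ⟨mkP ⟨α, hαlt⟩ rzero, ?_, ?_⟩
    · intro p hp
      rcases eq_or_lt_of_le (hαle p hp) with h' | h'
      · exact absurd (⟨p, hp, h'⟩ : α ∈ A) hmem
      · exact plus_le_iff.2 (Or.inl (somega_lt.2 h'))
    · intro b hb
      rcases eq_or_lt_of_le (hαub b hb) with h' | h'
      · exact plus_le_iff.2 (Or.inr ⟨Subtype.ext h', (sndP b).2.1⟩)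
      · exact plus_le_iff.2 (Or.inl (somega_lt.2 h'))

theorem plus_glb (S : Set LongLinePlus) (hne : S.Nonempty) : ∃ w, IsGLB S w := by
  set A : Set Ordinal := (fun p => (fstP p).val) '' S with hA
  have hAne : A.Nonempty := hne.image _
  have hmem : sInf A ∈ A := csInf_mem hAne
  set α := sInf A with hα
  obtain ⟨p0, hp0S, hp0⟩ := hmem
  have hαlt : α < omega1 := hp0 ▸ somega_mem (fstP p0)
  have hαle : ∀ p ∈ S, α ≤ (fstP p).val := fun p hp => csInf_le (OrderBot.bddBelow A) ⟨p, hp, rfl⟩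
  set T : Set ℝ := {r | ∃ p ∈ S, (fstP p).val = α ∧ (sndP p).val = r} with hT
  have hTne : T.Nonempty := ⟨(sndP p0).val, p0, hp0S, hp0, rfl⟩
  have hTbdd : BddBelow T := by
    refine ⟨0, ?_⟩
    rintro _ ⟨p, _, _, rfl⟩
    exact (sndP p).2.1
  set r : ℝ := sInf T with hr
  have h0r : (0:ℝ) ≤ r := le_csInf hTne (by rintro _ ⟨p, _, _, rfl⟩; exact (sndP p).2.1)
  have hr1 : r < 1 := lt_of_le_of_lt (csInf_le hTbdd ⟨p0, hp0S, hp0, rfl⟩) (sndP p0).2.2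
  refine ⟨mkP ⟨α, hαlt⟩ ⟨r, h0r, hr1⟩, ?_, ?_⟩
  · intro p hp
    rcases eq_or_lt_of_le (hαle p hp) with h' | h'
    · refine plus_le_iff.2 (Or.inr ⟨Subtype.ext h', ?_⟩)
      exact ico_le.2 (csInf_le hTbdd ⟨p, hp, h'.symm, rfl⟩)
    · exact plus_le_iff.2 (Or.inl (somega_lt.2 h'))
  · intro b hb
    have hble : (fstP b).val ≤ α := by
      refine le_csInf hAne ?_
      rintro _ ⟨p, hp, rfl⟩
      exact somega_le.1 (fstP_mono (hb hp))
    rcases eq_or_lt_of_le hble with h' | h'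
    · refine plus_le_iff.2 (Or.inr ⟨Subtype.ext h', ?_⟩)
      refine ico_le.2 (le_csInf hTne ?_)
      rintro _ ⟨p, hp, hpα, rfl⟩
      have hfst : fstP b = fstP p := Subtype.ext (h'.trans hpα.symm)
      rcases plus_le_iff.1 (hb hp) with h'' | ⟨_, h''⟩
      · exact absurd (hfst ▸ h'') (lt_irrefl _)
      · exact ico_le.1 h''
    · exact plus_le_iff.2 (Or.inl (somega_lt.2 h'))

def bplus : LongLinePlus := mkP ozero rzero

theorem bplus_le (p : LongLinePlus) : bplus ≤ p := by
  rcases eq_or_lt_of_le (zero_le : (0 : Ordinal) ≤ (fstP p).val) with h | h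
  · refine plus_le_iff.2 (Or.inr ⟨Subtype.ext h, (sndP p).2.1⟩)
  · exact plus_le_iff.2 (Or.inl (somega_lt.2 h))

theorem L_lub (S : Set LongLine) (hne : S.Nonempty) (hbdd : BddAbove S) :
    ∃ w, IsLUB S w := by
  by_cases hR : ∃ p, inR p ∈ S
  · obtain ⟨pR, hpR⟩ := hR
    obtain ⟨b, hb⟩ := hbdd
    rcases L_cases b with ⟨a, rfl⟩ | ⟨pb, rfl⟩
    · exact absurd (hb hpR) not_inR_le_inL
    set T : Set LongLinePlus := inR ⁻¹' S with hT
    have hTne : T.Nonempty := ⟨pR, hpR⟩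
    have hTbdd : BddAbove T := ⟨pb, fun p hp => inR_le_inR.1 (hb hp)⟩
    obtain ⟨w, hw⟩ := plus_lub T hTne hTbdd
    refine ⟨inR w, ?_, ?_⟩
    · intro z hz
      rcases L_cases z with ⟨a, rfl⟩ | ⟨p, rfl⟩
      · exact le_of_lt (inL_lt_inR a w)
      · exact inR_le_inR.2 (hw.1 hz)
    · intro b' hb'
      rcases L_cases b' with ⟨a, rfl⟩ | ⟨q, rfl⟩
      · exact absurd (hb' hpR) not_inR_le_inL
      · exact inR_le_inR.2 (hw.2 fun p hp => inR_le_inR.1 (hb' hp))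
  · set TA : Set LongLinePlusPos := {a | inL a ∈ S} with hTA
    have hTAne : TA.Nonempty := by
      obtain ⟨z, hz⟩ := hne
      rcases L_cases z with ⟨a, rfl⟩ | ⟨p, rfl⟩
      · exact ⟨a, hz⟩
      · exact absurd ⟨p, hz⟩ hR
    by_cases hlb : ∃ a0 : LongLinePlusPos, ∀ a ∈ TA, a0 ≤ a
    · obtain ⟨a0, ha0⟩ := hlb
      set Sv : Set LongLinePlus := Subtype.val '' TA with hSv
      obtain ⟨w, hw⟩ := plus_glb Sv (hTAne.image _)
      have ha0w : a0.val ≤ w := by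
        refine hw.2 ?_
        rintro _ ⟨a, ha, rfl⟩
        exact ha0 a ha
      have hwpos : ∃ y, y < w := by
        obtain ⟨y, hy⟩ := a0.2
        exact ⟨y, lt_of_lt_of_le hy ha0w⟩
      refine ⟨inL ⟨w, hwpos⟩, ?_, ?_⟩
      · intro z hz
        rcases L_cases z with ⟨a, rfl⟩ | ⟨p, rfl⟩
        · exact inL_le_inL.2 (hw.1 ⟨a, hz, rfl⟩)
        · exact absurd ⟨p, hz⟩ hR
      · intro b hb
        rcases L_cases b with ⟨c, rfl⟩ | ⟨q, rfl⟩
        · refine inL_le_inL.2 ?_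
          show c.val ≤ w
          refine hw.2 ?_
          rintro _ ⟨a, ha, rfl⟩
          exact inL_le_inL.1 (hb ha)
        · exact le_of_lt (inL_lt_inR _ q)
    · refine ⟨inR bplus, ?_, ?_⟩
      · intro z hz
        rcases L_cases z with ⟨a, rfl⟩ | ⟨p, rfl⟩
        · exact le_of_lt (inL_lt_inR a bplus)
        · exact absurd ⟨p, hz⟩ hR
      · intro b hb
        rcases L_cases b with ⟨c, rfl⟩ | ⟨q, rfl⟩
        · exact absurd ⟨c, fun a ha => inL_le_inL.1 (hb ha)⟩ hlb
        · exact inR_le_inR.2 (bplus_le q)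

theorem bar_lub (S : Set LongLineBar) (hne : S.Nonempty) : ∃ w, IsLUB S w := by
  by_cases htop : ⊤ ∈ S
  · exact ⟨⊤, fun z _ => le_top, fun b hb => hb htop⟩
  by_cases hL : ∃ z : LongLine, z.toBar ∈ S
  · obtain ⟨z0, hz0⟩ := hL
    set T : Set LongLine := LongLine.toBar ⁻¹' S with hT
    have hTne : T.Nonempty := ⟨z0, hz0⟩
    by_cases hbdd : BddAbove T
    · obtain ⟨w, hw⟩ := L_lub T hTne hbdd
      refine ⟨w.toBar, ?_, ?_⟩
      · intro e he
        rcases bar_cases e with rfl | rfl | ⟨z, rfl⟩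
        · exact bot_le
        · exact absurd he htop
        · exact toBar_le_toBar.2 (hw.1 he)
      · intro b hb
        rcases bar_cases b with rfl | rfl | ⟨c, rfl⟩
        · exact absurd (le_bot_iff.1 (hb hz0)) (toBar_ne_bot z0)
        · exact le_top
        · exact toBar_le_toBar.2 (hw.2 fun z hz => toBar_le_toBar.1 (hb hz))
    · refine ⟨⊤, fun z _ => le_top, ?_⟩
      intro b hb
      rcases bar_cases b with rfl | rfl | ⟨c, rfl⟩
      · exact absurd (le_bot_iff.1 (hb hz0)) (toBar_ne_bot z0)
      · exact le_refl _
      · exact absurd ⟨c, fun z hz => toBar_le_toBar.1 (hb hz)⟩ hbdd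
  · refine ⟨⊥, ?_, fun b _ => bot_le⟩
    intro e he
    rcases bar_cases e with rfl | rfl | ⟨z, rfl⟩
    · exact le_refl _
    · exact absurd he htop
    · exact absurd ⟨z, he⟩ hL
def IsRat (r : ℝ) : Prop := ∃ q : ℚ, (q : ℝ) = r

def ratL (z : LongLine) : Prop :=
  (∃ a, z = inL a ∧ IsRat (sndP a.val).val) ∨ (∃ p, z = inR p ∧ IsRat (sndP p).val)

/-- Between any two elements of L₊ there is one with rational real coordinate. -/
theorem plus_rat_btwn {p q : LongLinePlus} (h : p < q) :
    ∃ z, IsRat (sndP z).val ∧ p < z ∧ z < q := by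
  rcases plus_lt_iff.1 h with h' | ⟨h', h''⟩
  · -- different ordinal coordinate : take (fstP p, rational above sndP p)
    obtain ⟨r, hr1, hr2⟩ := exists_rat_btwn (sndP p).2.2
    refine ⟨mkP (fstP p) ⟨r, le_trans (sndP p).2.1 (le_of_lt hr1), hr2⟩, ⟨r, rfl⟩, ?_, ?_⟩
    · exact plus_lt_iff.2 (Or.inr ⟨rfl, ico_lt.2 hr1⟩)
    · exact plus_lt_iff.2 (Or.inl h')
  · obtain ⟨r, hr1, hr2⟩ := exists_rat_btwn (ico_lt.1 h'')
    refine ⟨mkP (fstP p) ⟨r, le_trans (sndP p).2.1 (le_of_lt hr1), lt_trans hr2 (sndP q).2.2⟩,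
      ⟨r, rfl⟩, ?_, ?_⟩
    · exact plus_lt_iff.2 (Or.inr ⟨rfl, ico_lt.2 hr1⟩)
    · exact plus_lt_iff.2 (h' ▸ Or.inr ⟨rfl, ico_lt.2 hr2⟩)

/-- Below any positive element there is a positive element with rational coordinate. -/
theorem pos_rat_below (a : LongLinePlusPos) :
    ∃ c : LongLinePlusPos, IsRat (sndP c.val).val ∧ c < a := by
  obtain ⟨y, hy⟩ := a.2
  have h : bplus < a.val := lt_of_le_of_lt (bplus_le y) hy
  obtain ⟨z, hz1, hz2, hz3⟩ := plus_rat_btwn h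
  exact ⟨⟨z, ⟨bplus, hz2⟩⟩, hz1, hz3⟩

theorem L_rat_btwn {u v : LongLine} (h : u < v) :
    ∃ z, ratL z ∧ u < z ∧ z < v := by
  rcases L_cases u with ⟨a, rfl⟩ | ⟨p, rfl⟩
  · rcases L_cases v with ⟨b, rfl⟩ | ⟨q, rfl⟩
    · -- inL a < inL b, i.e. b < a in Pos
      have hba : b < a := inL_lt_inL.1 h
      obtain ⟨z, hz1, hz2, hz3⟩ := plus_rat_btwn (posval_lt.1 hba)
      refine ⟨inL ⟨z, ⟨b.val, hz2⟩⟩, Or.inl ⟨_, rfl, hz1⟩, ?_, ?_⟩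
      · exact inL_lt_inL.2 (posval_lt.2 hz3)
      · exact inL_lt_inL.2 (posval_lt.2 hz2)
    · -- inL a < inR q : take rational positive element below a
      obtain ⟨c, hc1, hc2⟩ := pos_rat_below a
      exact ⟨inL c, Or.inl ⟨c, rfl, hc1⟩, inL_lt_inL.2 hc2, inL_lt_inR c q⟩
  · rcases L_cases v with ⟨b, rfl⟩ | ⟨q, rfl⟩
    · exact absurd (le_of_lt h) not_inR_le_inL
    · obtain ⟨z, hz1, hz2, hz3⟩ := plus_rat_btwn (inR_lt_inR.1 h)
      exact ⟨inR z, Or.inr ⟨z, rfl, hz1⟩, inR_lt_inR.2 hz2, inR_lt_inR.2 hz3⟩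

def ordL (z : LongLine) : Ordinal :=
  Sum.rec (fun a => (fstP (OrderDual.ofDual a).val).val) (fun p => (fstP p).val) (ofLex z)

theorem ordL_inL (a : LongLinePlusPos) : ordL (inL a) = (fstP a.val).val := rfl
theorem ordL_inR (p : LongLinePlus) : ordL (inR p) = (fstP p).val := rfl

def realL (z : LongLine) : ℝ :=
  Sum.rec (fun a => (sndP (OrderDual.ofDual a).val).val) (fun p => (sndP p).val) (ofLex z)

theorem realL_inL (a : LongLinePlusPos) : realL (inL a) = (sndP a.val).val := rfl
theorem realL_inR (p : LongLinePlus) : realL (inR p) = (sndP p).val := rfl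

def isR (z : LongLine) : Bool := Sum.rec (fun _ => false) (fun _ => true) (ofLex z)

theorem isR_inL (a : LongLinePlusPos) : isR (inL a) = false := rfl
theorem isR_inR (p : LongLinePlus) : isR (inR p) = true := rfl

theorem L_recover (z : LongLine) : ∀ w : LongLine,
    ordL z = ordL w → realL z = realL w → isR z = isR w → z = w := by
  intro w h1 h2 h3
  rcases L_cases z with ⟨a, rfl⟩ | ⟨p, rfl⟩ <;> rcases L_cases w with ⟨b, rfl⟩ | ⟨q, rfl⟩
  · rw [ordL_inL, ordL_inL] at h1
    rw [realL_inL, realL_inL] at h2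
    have : a = b := Subtype.ext (plus_ext (Subtype.ext h1) (Subtype.ext h2))
    rw [this]
  · exact absurd (by rw [isR_inL, isR_inR] at h3; exact h3) (by simp)
  · exact absurd (by rw [isR_inL, isR_inR] at h3; exact h3.symm) (by simp)
  · rw [ordL_inR, ordL_inR] at h1
    rw [realL_inR, realL_inR] at h2
    rw [plus_ext (Subtype.ext h1) (Subtype.ext h2)]

theorem ratL_countable (x y : LongLine) :
    Set.Countable {z : LongLine | ratL z ∧ x < z ∧ z < y} := by
  set S := {z : LongLine | ratL z ∧ x < z ∧ z < y} with hS
  set B : Ordinal := max (ordL x) (ordL y) + 1 with hB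
  have hBlt : B < omega1 := by
    refine succ_lt_omega1 (max_lt ?_ ?_)
    · rcases L_cases x with ⟨a, rfl⟩ | ⟨p, rfl⟩
      · rw [ordL_inL]; exact somega_mem _
      · rw [ordL_inR]; exact somega_mem _
    · rcases L_cases y with ⟨a, rfl⟩ | ⟨p, rfl⟩
      · rw [ordL_inL]; exact somega_mem _
      · rw [ordL_inR]; exact somega_mem _
  have hord : ∀ z ∈ S, ordL z < B := by
    rintro z ⟨_, hxz, hzy⟩
    rcases L_cases z with ⟨a, rfl⟩ | ⟨p, rfl⟩
    · -- z = inL a; then x = inL ax with a < ax in Pos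
      rcases L_cases x with ⟨ax, rfl⟩ | ⟨px, rfl⟩
      · have : a < ax := inL_lt_inL.1 hxz
        have h2 : (fstP a.val).val ≤ (fstP ax.val).val :=
          somega_le.1 (fstP_mono (le_of_lt (posval_lt.1 this)))
        rw [ordL_inL]
        calc (fstP a.val).val ≤ (fstP ax.val).val := h2
        _ = ordL (inL ax) := rfl
        _ ≤ max (ordL (inL ax)) (ordL y) := le_max_left _ _
        _ < B := lt_add_one _
      · exact absurd (le_of_lt hxz) not_inR_le_inL
    · rcases L_cases y with ⟨ay, rfl⟩ | ⟨py, rfl⟩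
      · exact absurd (le_of_lt hzy) not_inR_le_inL
      · have h2 : (fstP p).val ≤ (fstP py).val := somega_le.1 (fstP_mono (le_of_lt (inR_lt_inR.1 hzy)))
        rw [ordL_inR]
        calc (fstP p).val ≤ (fstP py).val := h2
        _ = ordL (inR py) := rfl
        _ ≤ max (ordL x) (ordL (inR py)) := le_max_right _ _
        _ < B := lt_add_one _
  have hrat : ∀ z ∈ S, IsRat (realL z) := by
    rintro z ⟨hz, _, _⟩
    rcases hz with ⟨a, rfl, ha⟩ | ⟨p, rfl, hp⟩
    · rwa [realL_inL]
    · rwa [realL_inR]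
  rw [Set.countable_coe_iff.symm]
  haveI : Countable (Set.Iio B) := countable_Iio hBlt
  have hinj : Function.Injective (fun z : S =>
      ((⟨ordL z.val, hord z.val z.2⟩ : Set.Iio B),
       (Classical.choose (hrat z.val z.2) : ℚ), isR z.val)) := by
    intro z1 z2 h
    have h1 : ordL z1.val = ordL z2.val := congrArg (fun t => (t.1 : Ordinal)) h
    have h3 : isR z1.val = isR z2.val := congrArg (fun t => t.2.2) h
    have hq : (Classical.choose (hrat z1.val z1.2) : ℚ) = Classical.choose (hrat z2.val z2.2) :=
      congrArg (fun t => t.2.1) h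
    have h2 : realL z1.val = realL z2.val := by
      rw [← Classical.choose_spec (hrat z1.val z1.2), ← Classical.choose_spec (hrat z2.val z2.2), hq]
    exact Subtype.ext (L_recover z1.val z2.val h1 h2 h3)
  exact hinj.countable
theorem one_lt_omega1 : (1 : Ordinal) < omega1 := by
  have h := succ_lt_omega1 omega1_isLimit.pos
  simpa using h

def oneS : SOmega := ⟨1, one_lt_omega1⟩

/-- Every countable subset of L₊ has a strict upper bound which is positive. -/
theorem plus_csub (c : Set LongLinePlus) (hc : c.Countable) :
    ∃ b : LongLinePlus, (∃ y, y < b) ∧ ∀ p ∈ c, p < b := by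
  rcases c.eq_empty_or_nonempty with rfl | hne
  · refine ⟨mkP oneS rzero, ⟨bplus, ?_⟩, fun p hp => absurd hp (Set.notMem_empty p)⟩
    exact plus_lt_iff.2 (Or.inl (somega_lt.2 (show (ozero).val < (oneS).val from zero_lt_one)))
  · obtain ⟨f, hf⟩ := hc.exists_eq_range hne
    set γ : Ordinal := ⨆ n, (fstP (f n)).val with hγ
    have hγlt : γ < omega1 := sup_lt_omega1 _ (fun n => somega_mem (fstP (f n)))
    have hble : ∀ n, (fstP (f n)).val ≤ γ := by
      intro n
      exact le_ciSup (Ordinal.bddAbove_range _) n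
    refine ⟨mkP ⟨γ + 1, succ_lt_omega1 hγlt⟩ rzero, ⟨bplus, ?_⟩, ?_⟩
    · refine plus_lt_iff.2 (Or.inl (somega_lt.2 ?_))
      show (0 : Ordinal) < γ + 1
      exact lt_of_le_of_lt (zero_le : (0 : Ordinal) ≤ γ) (lt_add_one γ)
    · intro p hp
      rw [hf] at hp
      obtain ⟨n, rfl⟩ := hp
      exact plus_lt_iff.2 (Or.inl (somega_lt.2 (lt_of_le_of_lt (hble n) (lt_add_one γ))))

/-- Every countable subset of L has a strict upper bound. -/
theorem L_csub (c : Set LongLine) (hc : c.Countable) : ∃ b : LongLine, ∀ z ∈ c, z < b := by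
  obtain ⟨bp, _, hbp⟩ := plus_csub (inR ⁻¹' c) (hc.preimage (fun p q h => by
    have : toLex (Sum.inr p : LongLinePlusPosᵒᵈ ⊕ LongLinePlus) = toLex (Sum.inr q) := h
    simpa using this))
  refine ⟨inR bp, ?_⟩
  intro z hz
  rcases L_cases z with ⟨a, rfl⟩ | ⟨p, rfl⟩
  · exact inL_lt_inR a bp
  · exact inR_lt_inR.2 (hbp p hz)

/-- Every countable subset of L has a strict lower bound. -/
theorem L_cslb (c : Set LongLine) (hc : c.Countable) : ∃ b : LongLine, ∀ z ∈ c, b < z := by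
  have hinj : Function.Injective (fun a : LongLinePlusPos => inL a) := by
    intro a b h
    have : toLex (Sum.inl (OrderDual.toDual a) : LongLinePlusPosᵒᵈ ⊕ LongLinePlus)
        = toLex (Sum.inl (OrderDual.toDual b)) := h
    simpa using this
  obtain ⟨bp, hbppos, hbp⟩ := plus_csub (Subtype.val '' (inL ⁻¹' c))
    ((hc.preimage hinj).image _)
  refine ⟨inL ⟨bp, hbppos⟩, ?_⟩
  intro z hz
  rcases L_cases z with ⟨a, rfl⟩ | ⟨p, rfl⟩
  · exact inL_lt_inL.2 (posval_lt.2 (hbp a.val ⟨a, hz, rfl⟩))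
  · exact inL_lt_inR _ p
theorem joined_lt {x y : LongLine} (hxy : x < y) : Joined x.toBar y.toBar := by
  classical
  set DD : Set LongLineBar := LongLine.toBar '' {z | ratL z ∧ x < z ∧ z < y} with hDD
  have hDDc : DD.Countable := (ratL_countable x y).image _
  have hDDsub : ∀ d ∈ DD, x.toBar < d ∧ d < y.toBar := by
    rintro _ ⟨z, ⟨_, hz1, hz2⟩, rfl⟩
    exact ⟨toBar_lt_toBar.2 hz1, toBar_lt_toBar.2 hz2⟩
  have dense' : ∀ u v : LongLineBar, x.toBar ≤ u → v ≤ y.toBar → u < v →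
      ∃ d ∈ DD, u < d ∧ d < v := by
    intro u v hu hv huv
    rcases bar_cases u with rfl | rfl | ⟨u', rfl⟩
    · exact absurd (le_bot_iff.1 hu) (toBar_ne_bot x)
    · exact absurd (lt_of_lt_of_le huv hv) (by simp)
    rcases bar_cases v with rfl | rfl | ⟨v', rfl⟩
    · exact absurd (le_bot_iff.1 (le_of_lt huv)) (toBar_ne_bot u')
    · exact absurd hv (not_le.2 (toBar_lt_top y))
    obtain ⟨z, hz1, hz2, hz3⟩ := L_rat_btwn (toBar_lt_toBar.1 huv)
    refine ⟨z.toBar, ⟨z, ⟨hz1, ?_, ?_⟩, rfl⟩, toBar_lt_toBar.2 hz2, toBar_lt_toBar.2 hz3⟩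
    · exact lt_of_le_of_lt (toBar_le_toBar.1 hu) hz2
    · exact lt_of_lt_of_le hz3 (toBar_le_toBar.1 hv)
  -- the countable dense subset is order-isomorphic to the rationals in (0,1)
  haveI : Countable ↥DD := hDDc.to_subtype
  haveI : DenselyOrdered ↥DD := by
    constructor
    rintro ⟨d1, hd1⟩ ⟨d2, hd2⟩ h
    obtain ⟨d, hd, h1, h2⟩ := dense' d1 d2 (le_of_lt (hDDsub d1 hd1).1)
      (le_of_lt (hDDsub d2 hd2).2) (Subtype.mk_lt_mk.1 h)
    exact ⟨⟨d, hd⟩, Subtype.mk_lt_mk.2 h1, Subtype.mk_lt_mk.2 h2⟩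
  haveI : NoMinOrder ↥DD := by
    constructor
    rintro ⟨d, hd⟩
    obtain ⟨d', hd', h1, h2⟩ := dense' x.toBar d (le_refl _) (le_of_lt (hDDsub d hd).2)
      (hDDsub d hd).1
    exact ⟨⟨d', hd'⟩, Subtype.mk_lt_mk.2 h2⟩
  haveI : NoMaxOrder ↥DD := by
    constructor
    rintro ⟨d, hd⟩
    obtain ⟨d', hd', h1, h2⟩ := dense' d y.toBar (le_of_lt (hDDsub d hd).1) (le_refl _)
      (hDDsub d hd).2
    exact ⟨⟨d', hd'⟩, Subtype.mk_lt_mk.2 h1⟩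
  haveI : Nonempty ↥DD := by
    obtain ⟨d, hd, _, _⟩ := dense' x.toBar y.toBar (le_refl _) (le_refl _) (toBar_lt_toBar.2 hxy)
    exact ⟨⟨d, hd⟩⟩
  haveI : NoMinOrder ↥(Set.Ioo (0:ℚ) 1) := by
    constructor
    rintro ⟨q, hq1, hq2⟩
    obtain ⟨q', h1, h2⟩ := exists_between hq1
    exact ⟨⟨q', h1, lt_trans h2 hq2⟩, Subtype.mk_lt_mk.2 h2⟩
  haveI : NoMaxOrder ↥(Set.Ioo (0:ℚ) 1) := by
    constructor
    rintro ⟨q, hq1, hq2⟩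
    obtain ⟨q', h1, h2⟩ := exists_between hq2
    exact ⟨⟨q', lt_trans hq1 h1, h2⟩, Subtype.mk_lt_mk.2 h1⟩
  haveI : Nonempty ↥(Set.Ioo (0:ℚ) 1) := ⟨⟨1/2, by norm_num⟩⟩
  obtain ⟨g⟩ := Order.iso_of_countable_dense ↥(Set.Ioo (0:ℚ) 1) ↥DD
  -- the sup function
  set SetF : ℝ → Set LongLineBar :=
    fun t => insert x.toBar ((fun q : ↥(Set.Ioo (0:ℚ) 1) => (g q).val) '' {q | (q.val : ℝ) < t})
    with hSetF
  have hSetF_ne : ∀ t, (SetF t).Nonempty := fun t => ⟨x.toBar, Set.mem_insert _ _⟩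
  set F : ℝ → LongLineBar := fun t => (bar_lub (SetF t) (hSetF_ne t)).choose with hF
  have hFlub : ∀ t, IsLUB (SetF t) (F t) := fun t => (bar_lub (SetF t) (hSetF_ne t)).choose_spec
  have hFge : ∀ t, x.toBar ≤ F t := fun t => (hFlub t).1 (Set.mem_insert _ _)
  have hgmem : ∀ q : ↥(Set.Ioo (0:ℚ) 1), (g q).val ∈ DD := fun q => (g q).2
  have hFle : ∀ t, F t ≤ y.toBar := by
    intro t
    refine (hFlub t).2 ?_
    rintro e (rfl | ⟨q, hq, rfl⟩)
    · exact le_of_lt (toBar_lt_toBar.2 hxy)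
    · exact le_of_lt (hDDsub _ (hgmem q)).2
  have hFmem : ∀ t, ∀ q : ↥(Set.Ioo (0:ℚ) 1), (q.val : ℝ) < t → (g q).val ≤ F t :=
    fun t q hq => (hFlub t).1 (Set.mem_insert_of_mem _ ⟨q, hq, rfl⟩)
  have hF0 : ∀ t : ℝ, t ≤ 0 → F t = x.toBar := by
    intro t ht
    refine IsLUB.unique (hFlub t) ?_
    have : SetF t = {x.toBar} := by
      rw [hSetF]
      refine Set.Subset.antisymm ?_ (fun e he => by simp at he; simp [he])
      rintro e (rfl | ⟨q, hq, rfl⟩)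
      · exact Set.mem_singleton _
      · exfalso
        have h0 : (0:ℝ) < q.val := by exact_mod_cast q.2.1
        exact absurd (lt_of_lt_of_le hq ht) (not_lt.2 (le_of_lt h0))
    rw [this]
    exact isLUB_singleton
  have hF1 : F 1 = y.toBar := by
    refine IsLUB.unique (hFlub 1) ?_
    constructor
    · rintro e (rfl | ⟨q, hq, rfl⟩)
      · exact le_of_lt (toBar_lt_toBar.2 hxy)
      · exact le_of_lt (hDDsub _ (hgmem q)).2
    · intro b hb
      by_contra hlt
      push_neg at hlt
      have hxb : x.toBar ≤ b := hb (Set.mem_insert _ _)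
      obtain ⟨d, hd, h1, h2⟩ := dense' b y.toBar hxb (le_refl _) hlt
      set q1 := g.symm ⟨d, hd⟩ with hq1
      have hdval : (g q1).val = d := by rw [hq1, OrderIso.apply_symm_apply]
      have hmem : (g q1).val ∈ SetF 1 := by
        refine Set.mem_insert_of_mem _ ⟨q1, ?_, rfl⟩
        show (q1.val : ℝ) < 1
        exact_mod_cast q1.2.2
      have : d ≤ b := hdval ▸ hb hmem
      exact absurd (lt_of_le_of_lt this h1) (lt_irrefl d)
  have hFmono : Monotone F := by
    intro s t hst
    refine (hFlub s).2 ?_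
    rintro e (rfl | ⟨q, hq, rfl⟩)
    · exact hFge t
    · exact hFmem t q (lt_of_lt_of_le hq hst)
  have hcont : Continuous F := by
    rw [continuous_iff_continuousAt]
    intro t
    rw [ContinuousAt, tendsto_order]
    constructor
    · intro w hw
      have hex : ∃ e ∈ SetF t, w < e := by
        by_contra h
        push_neg at h
        exact absurd ((hFlub t).2 h) (not_le.2 hw)
      obtain ⟨e, he, hwe⟩ := hex
      rcases he with rfl | ⟨q, hq, rfl⟩
      · exact Filter.Eventually.of_forall (fun s => lt_of_lt_of_le hwe (hFge s))
      · refine Filter.eventually_of_mem (Ioi_mem_nhds hq) (fun s hs => ?_)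
        exact lt_of_lt_of_le hwe (hFmem s q hs)
    · intro w hw
      by_cases hyw : y.toBar < w
      · exact Filter.Eventually.of_forall (fun s => lt_of_le_of_lt (hFle s) hyw)
      push_neg at hyw
      obtain ⟨d, hd, h1, h2⟩ := dense' (F t) w (hFge t) hyw hw
      set q1 := g.symm ⟨d, hd⟩ with hq1def
      have hdval : (g q1).val = d := by rw [hq1def, OrderIso.apply_symm_apply]
      have ht1 : ¬ ((q1.val : ℚ) : ℝ) < t := by
        intro hlt
        exact absurd (hdval ▸ hFmem t q1 hlt) (not_le.2 h1)
      have ht2 : ((q1.val : ℚ) : ℝ) ≠ t := by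
        intro heq
        obtain ⟨d', hd', h1', h2'⟩ := dense' (F t) d (hFge t) (le_of_lt (hDDsub d hd).2) h1
        set q' := g.symm ⟨d', hd'⟩ with hq'def
        have hdval' : (g q').val = d' := by rw [hq'def, OrderIso.apply_symm_apply]
        have hqq : q' < q1 := by
          rw [hq'def, hq1def, g.symm.lt_iff_lt]
          exact Subtype.mk_lt_mk.2 h2'
        have hcast : ((q'.val : ℚ) : ℝ) < t := by
          rw [← heq]
          exact_mod_cast Subtype.coe_lt_coe.2 hqq
        exact absurd (hdval' ▸ hFmem t q' hcast) (not_le.2 h1')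
      have htlt : t < ((q1.val : ℚ) : ℝ) := lt_of_le_of_ne (not_lt.1 ht1) (fun h => ht2 h.symm)
      refine Filter.eventually_of_mem (Iio_mem_nhds htlt) (fun s hs => ?_)
      have hFsd : F s ≤ d := by
        refine (hFlub s).2 ?_
        rintro e (rfl | ⟨q, hq, rfl⟩)
        · exact le_of_lt (hDDsub d hd).1
        · have : q < q1 := by
            rw [← Subtype.coe_lt_coe]
            have hs' : s < ((q1.val : ℚ) : ℝ) := hs
            exact_mod_cast lt_trans hq hs'
          rw [← hdval]
          exact le_of_lt (Subtype.coe_lt_coe.2 (g.lt_iff_lt.2 this))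
      exact lt_of_le_of_lt hFsd h2
  exact ⟨⟨⟨fun s => F s.val, hcont.comp continuous_subtype_val⟩,
    by show F ((0 : unitInterval) : ℝ) = x.toBar; exact hF0 _ (le_of_eq rfl),
    by show F ((1 : unitInterval) : ℝ) = y.toBar; exact hF1⟩⟩
theorem joined_all (x y : LongLine) : Joined x.toBar y.toBar := by
  rcases lt_trichotomy x y with h | rfl | h
  · exact joined_lt h
  · exact Joined.refl _
  · exact (joined_lt h).symm

theorem bot_joined {v : LongLineBar} (h : Joined (⊥ : LongLineBar) v) : v = ⊥ := by
  by_contra hv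
  obtain ⟨γ⟩ := h
  have hpre : IsPreconnected (Set.range γ) := by
    rw [← Set.image_univ]
    exact isPreconnected_univ.image _ γ.continuous.continuousOn
  have hicc : Set.Icc (⊥ : LongLineBar) v ⊆ Set.range γ :=
    hpre.ordConnected.out ⟨0, γ.source⟩ ⟨1, γ.target⟩
  obtain ⟨c, hc, hcl⟩ := (TopologicalSpace.isSeparable_range γ.continuous).mono hicc
  have key : ∀ b1 b2 : LongLine, b2 < b1 → (∀ e ∈ LongLine.toBar ⁻¹' c, b1 < e) →
      b2.toBar ∈ closure c → False := by
    intro b1 b2 hb hbd hcl2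
    obtain ⟨e, he1, he2⟩ := mem_closure_iff.1 hcl2 (Set.Ioo ⊥ b1.toBar) isOpen_Ioo
      ⟨bot_lt_toBar b2, toBar_lt_toBar.2 hb⟩
    rcases bar_cases e with rfl | rfl | ⟨e', rfl⟩
    · exact absurd he1.1 (lt_irrefl _)
    · exact absurd (lt_of_lt_of_le he1.2 le_top) (lt_irrefl _)
    · exact absurd (toBar_lt_toBar.1 he1.2) (not_lt.2 (le_of_lt (hbd e' he2)))
  rcases bar_cases v with rfl | rfl | ⟨v', rfl⟩
  · exact hv rfl
  · obtain ⟨b1, hb1⟩ := L_cslb (LongLine.toBar ⁻¹' c) (hc.preimage toBar_injective)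
    obtain ⟨b2, hb2⟩ := L_cslb {b1} (Set.countable_singleton b1)
    exact key b1 b2 (hb2 b1 rfl) hb1 (hcl ⟨bot_le, le_top⟩)
  · obtain ⟨b1, hb1⟩ := L_cslb ((LongLine.toBar ⁻¹' c) ∪ {v'})
      ((hc.preimage toBar_injective).union (Set.countable_singleton v'))
    obtain ⟨b2, hb2⟩ := L_cslb {b1} (Set.countable_singleton b1)
    have hble : b2.toBar ≤ v'.toBar := by
      refine le_of_lt (toBar_lt_toBar.2 ?_)
      exact lt_trans (hb2 b1 rfl) (hb1 v' (Or.inr rfl))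
    exact key b1 b2 (hb2 b1 rfl) (fun e he => hb1 e (Or.inl he)) (hcl ⟨bot_le, hble⟩)

theorem top_joined {v : LongLineBar} (h : Joined (⊤ : LongLineBar) v) : v = ⊤ := by
  by_contra hv
  obtain ⟨γ⟩ := h
  have hpre : IsPreconnected (Set.range γ) := by
    rw [← Set.image_univ]
    exact isPreconnected_univ.image _ γ.continuous.continuousOn
  have hicc : Set.Icc v (⊤ : LongLineBar) ⊆ Set.range γ :=
    hpre.ordConnected.out ⟨1, γ.target⟩ ⟨0, γ.source⟩
  obtain ⟨c, hc, hcl⟩ := (TopologicalSpace.isSeparable_range γ.continuous).mono hicc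
  have key : ∀ b1 b2 : LongLine, b1 < b2 → (∀ e ∈ LongLine.toBar ⁻¹' c, e < b1) →
      b2.toBar ∈ closure c → False := by
    intro b1 b2 hb hbd hcl2
    obtain ⟨e, he1, he2⟩ := mem_closure_iff.1 hcl2 (Set.Ioo b1.toBar ⊤) isOpen_Ioo
      ⟨toBar_lt_toBar.2 hb, toBar_lt_top b2⟩
    rcases bar_cases e with rfl | rfl | ⟨e', rfl⟩
    · exact absurd (lt_of_le_of_lt bot_le he1.1) (lt_irrefl _)
    · exact absurd he1.2 (lt_irrefl _)
    · exact absurd (toBar_lt_toBar.1 he1.1) (not_lt.2 (le_of_lt (hbd e' he2)))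
  rcases bar_cases v with rfl | rfl | ⟨v', rfl⟩
  · obtain ⟨b1, hb1⟩ := L_csub (LongLine.toBar ⁻¹' c) (hc.preimage toBar_injective)
    obtain ⟨b2, hb2⟩ := L_csub {b1} (Set.countable_singleton b1)
    exact key b1 b2 (hb2 b1 rfl) hb1 (hcl ⟨bot_le, le_top⟩)
  · exact hv rfl
  · obtain ⟨b1, hb1⟩ := L_csub ((LongLine.toBar ⁻¹' c) ∪ {v'})
      ((hc.preimage toBar_injective).union (Set.countable_singleton v'))
    obtain ⟨b2, hb2⟩ := L_csub {b1} (Set.countable_singleton b1)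
    have hble : v'.toBar ≤ b2.toBar := by
      refine le_of_lt (toBar_lt_toBar.2 ?_)
      exact lt_trans (hb1 v' (Or.inr rfl)) (hb2 b1 rfl)
    exact key b1 b2 (hb2 b1 rfl) (fun e he => hb1 e (Or.inl he)) (hcl ⟨hble, le_top⟩)

end LL

open LL in
/-- The extended long line `L̄` has exactly three path components: `{-Ω}`, `{Ω}` and `L`. -/
theorem longLineBar_pathComponents :
    pathComponent (⊥ : LongLineBar) = {⊥} ∧
    pathComponent (⊤ : LongLineBar) = {⊤} ∧
    (∀ x : LongLine, pathComponent x.toBar = Set.range LongLine.toBar) ∧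
    ∀ y : LongLineBar, y = ⊥ ∨ y = ⊤ ∨ y ∈ Set.range LongLine.toBar := by
  refine ⟨?_, ?_, ?_, ?_⟩
  · refine Set.Subset.antisymm (fun w hw => bot_joined hw) (fun w hw => ?_)
    rw [Set.mem_singleton_iff.1 hw]
    exact mem_pathComponent_self _
  · refine Set.Subset.antisymm (fun w hw => top_joined hw) (fun w hw => ?_)
    rw [Set.mem_singleton_iff.1 hw]
    exact mem_pathComponent_self _
  · intro x
    refine Set.Subset.antisymm (fun w hw => ?_) ?_
    · have hj : Joined x.toBar w := hw
      rcases bar_cases w with rfl | rfl | ⟨z, rfl⟩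
      · exact absurd (bot_joined hj.symm) (toBar_ne_bot x)
      · exact absurd (top_joined hj.symm) (toBar_ne_top x)
      · exact ⟨z, rfl⟩
    · rintro _ ⟨z, rfl⟩
      exact joined_all x z
  · intro w
    rcases bar_cases w with rfl | rfl | ⟨z, rfl⟩
    · exact Or.inl rfl
    · exact Or.inr (Or.inl rfl)
    · exact Or.inr (Or.inr ⟨z, rfl⟩)
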